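/- Let λ₁, λ₂, λ₃ > 0 and let g be the corresponding inner product on m. Let U: m × m → m be the unique symmetric bilinear map satisfying 2g(U(X,Y), Z) = g(X, [Z,Y]_m) + g([Z,X]_m, Y) for all X, Y, Z ∈ m. Then U(X,Y) = 0 whenever X, Y ∈ m_j for some j ∈ {1,2,3}, and U(X,Y) = −(2λ_j)^{−1}(λ_{j+1} − λ_{j+2})[X,Y] whenever X ∈ m_{j+1} and Y ∈ m_{j+2}, where j = 1, 2, 3 and indices are reduced modulo 3. (This computes the Levi-Civita connection of the invariant metric g = (λ₁,λ₂,λ₃) on the flag manifold SU(3)/T_max.) -/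

import Mathlib

open ComplexConjugate Matrix

noncomputable section

/-- The matrix D(a,b,c) ∈ su(3): zero diagonal, X₁₂ = a, X₂₁ = −conj a,
X₂₃ = b, X₃₂ = −conj b, X₁₃ = conj c, X₃₁ = −c. -/
def Dm (a b c : ℂ) : Matrix (Fin 3) (Fin 3) ℂ :=
  !![0, a, conj c; -conj a, 0, b; -c, -conj b, 0]

/-- The real Lie algebra su(3) of traceless skew-Hermitian 3×3 complex
matrices (as a set of matrices, with bracket [X,Y] = XY − YX). -/
def su3 : Set (Matrix (Fin 3) (Fin 3) ℂ) :=
  {X | Xᴴ = -X ∧ X.trace = 0}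

/-- h: the diagonal matrices in su(3). -/
def hSet : Set (Matrix (Fin 3) (Fin 3) ℂ) :=
  {X | X ∈ su3 ∧ ∀ i j, i ≠ j → X i j = 0}

/-- m = {D(a,b,c)}. -/
def mSet : Set (Matrix (Fin 3) (Fin 3) ℂ) :=
  {X | ∃ a b c : ℂ, X = Dm a b c}

/-- The three components m₁, m₂, m₃ of m. -/
def mComp : Fin 3 → Set (Matrix (Fin 3) (Fin 3) ℂ) :=
  ![{X | ∃ a : ℂ, X = Dm a 0 0}, {X | ∃ b : ℂ, X = Dm 0 b 0},
    {X | ∃ c : ℂ, X = Dm 0 0 c}]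

/-- ⟨X,Y⟩₀ = −½ Re tr(XY). -/
def inner0 (X Y : Matrix (Fin 3) (Fin 3) ℂ) : ℝ :=
  -(1 / 2) * ((X * Y).trace).re

end

noncomputable section

/-- The m-component of a matrix in su(3) = h ⊕ m (h the diagonal part):
zero out the diagonal. -/
def projm (Z : Matrix (Fin 3) (Fin 3) ℂ) : Matrix (Fin 3) (Fin 3) ℂ :=
  Z - Matrix.diagonal fun i => Z i i

/-- Projections of m onto its components m₁, m₂, m₃. -/
def mProj : Fin 3 → (Matrix (Fin 3) (Fin 3) ℂ → Matrix (Fin 3) (Fin 3) ℂ) :=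
  ![fun X => Dm (X 0 1) 0 0, fun X => Dm 0 (X 1 2) 0, fun X => Dm 0 0 (-(X 2 0))]

/-- The invariant metric g = (λ₁,λ₂,λ₃): g(X,Y) = Σ_j λ_j ⟨X_j, Y_j⟩₀ for
X, Y ∈ m, where X_j is the m_j-component; m₁, m₂, m₃ are mutually
orthogonal. -/
def gmet (lam : Fin 3 → ℝ) (X Y : Matrix (Fin 3) (Fin 3) ℂ) : ℝ :=
  ∑ j : Fin 3, lam j * inner0 (mProj j X) (mProj j Y)

end

lemma gmet_Dm (lam : Fin 3 → ℝ) (a b c p q r : ℂ) :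
    gmet lam (Dm a b c) (Dm p q r) =
      lam 0 * (a * conj p).re + lam 1 * (b * conj q).re + lam 2 * (c * conj r).re := by
  simp only [gmet, Fin.sum_univ_three]
  simp [inner0, mProj, Dm, Matrix.trace_fin_three,
    Matrix.mul_apply, Fin.sum_univ_three, Complex.mul_re, Complex.conj_re, Complex.conj_im,
    Matrix.vecHead, Matrix.vecTail]
  ring

lemma projm_bracket (a b c p q r : ℂ) :
    projm ⁅Dm a b c, Dm p q r⁆ =
      Dm (conj (b * r - c * q)) (conj (c * p - a * r)) (conj (a * q - p * b)) := by
  ext i j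
  fin_cases i <;> fin_cases j <;>
    simp [projm, Dm, Ring.lie_def, Matrix.mul_apply, Fin.sum_univ_three,
      Matrix.diagonal] <;> ring

lemma Dm_mem : ∀ a b c : ℂ, Dm a b c ∈ mSet := fun a b c => ⟨a, b, c, rfl⟩

/-- nondegeneracy -/
lemma Dm_eq_of_gmet (lam : Fin 3 → ℝ) (hlam : ∀ j, 0 < lam j) (u v w a b c : ℂ)
    (h : ∀ p q r : ℂ,
      gmet lam (Dm u v w) (Dm p q r) = gmet lam (Dm a b c) (Dm p q r)) :
    Dm u v w = Dm a b c := by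
  have h1 := h (u - a) (v - b) (w - c)
  rw [gmet_Dm, gmet_Dm] at h1
  have e0 : lam 0 * Complex.normSq (u - a) + lam 1 * Complex.normSq (v - b) +
      lam 2 * Complex.normSq (w - c) = 0 := by
    simp only [Complex.normSq_apply, Complex.mul_re, Complex.conj_re,
      Complex.conj_im, Complex.sub_re, Complex.sub_im] at h1 ⊢
    linarith [h1]
  have n0 := Complex.normSq_nonneg (u - a)
  have n1 := Complex.normSq_nonneg (v - b)
  have n2 := Complex.normSq_nonneg (w - c)
  have l0 := hlam 0; have l1 := hlam 1; have l2 := hlam 2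
  have hu : u = a := by
    have : Complex.normSq (u - a) = 0 := by nlinarith
    have := Complex.normSq_eq_zero.mp this
    linear_combination this
  have hv : v = b := by
    have : Complex.normSq (v - b) = 0 := by nlinarith
    have := Complex.normSq_eq_zero.mp this
    linear_combination this
  have hw : w = c := by
    have : Complex.normSq (w - c) = 0 := by nlinarith
    have := Complex.normSq_eq_zero.mp this
    linear_combination this
  rw [hu, hv, hw]

lemma Dm_zero : Dm 0 0 0 = 0 := by
  ext i j; fin_cases i <;> fin_cases j <;> simp [Dm, Matrix.vecHead, Matrix.vecTail]


lemma smul_Dm (s : ℝ) (a b c : ℂ) :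
    s • Dm a b c = Dm ((s : ℂ) * a) ((s : ℂ) * b) ((s : ℂ) * c) := by
  ext i j
  fin_cases i <;> fin_cases j <;>
    simp [Dm, Matrix.vecHead, Matrix.vecTail, Complex.real_smul, _root_.map_mul,
      Complex.conj_ofReal] <;> ring

lemma brkt1 (x y : ℂ) : ⁅Dm 0 x 0, Dm 0 0 y⁆ = Dm (conj (x * y)) 0 0 := by
  ext i j
  fin_cases i <;> fin_cases j <;>
    simp [Dm, Ring.lie_def, Matrix.mul_apply, Fin.sum_univ_three,
      Matrix.vecHead, Matrix.vecTail] <;> ring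

lemma brkt2 (x y : ℂ) : ⁅Dm 0 0 x, Dm y 0 0⁆ = Dm 0 (conj (x * y)) 0 := by
  ext i j
  fin_cases i <;> fin_cases j <;>
    simp [Dm, Ring.lie_def, Matrix.mul_apply, Fin.sum_univ_three,
      Matrix.vecHead, Matrix.vecTail] <;> ring

lemma brkt3 (x y : ℂ) : ⁅Dm x 0 0, Dm 0 y 0⁆ = Dm 0 0 (conj (x * y)) := by
  ext i j
  fin_cases i <;> fin_cases j <;>
    simp [Dm, Ring.lie_def, Matrix.mul_apply, Fin.sum_univ_three,
      Matrix.vecHead, Matrix.vecTail] <;> ring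

/-- The Levi-Civita connection of the invariant metric g = (λ₁,λ₂,λ₃) on the
flag manifold SU(3)/T_max: the symmetric map U determined by
2g(U(X,Y),Z) = g(X,[Z,Y]_m) + g([Z,X]_m,Y) vanishes on m_j × m_j and equals
−(2λ_j)⁻¹(λ_{j+1} − λ_{j+2})[X,Y] on m_{j+1} × m_{j+2} (indices mod 3). -/
theorem stmt_9 (lam : Fin 3 → ℝ) (hlam : ∀ j, 0 < lam j)
    (U : Matrix (Fin 3) (Fin 3) ℂ → Matrix (Fin 3) (Fin 3) ℂ →
      Matrix (Fin 3) (Fin 3) ℂ)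
    (hUmem : ∀ X ∈ mSet, ∀ Y ∈ mSet, U X Y ∈ mSet)
    (hUsymm : ∀ X ∈ mSet, ∀ Y ∈ mSet, U X Y = U Y X)
    (hUdef : ∀ X ∈ mSet, ∀ Y ∈ mSet, ∀ Z ∈ mSet,
      2 * gmet lam (U X Y) Z =
        gmet lam X (projm ⁅Z, Y⁆) + gmet lam (projm ⁅Z, X⁆) Y) :
    (∀ j : Fin 3, ∀ X ∈ mComp j, ∀ Y ∈ mComp j, U X Y = 0) ∧
    (∀ j : Fin 3, ∀ X ∈ mComp (j + 1), ∀ Y ∈ mComp (j + 2),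
      U X Y = (-(2 * lam j)⁻¹ * (lam (j + 1) - lam (j + 2))) • ⁅X, Y⁆) := by
  have l0 := (hlam 0).ne'
  have l1 := (hlam 1).ne'
  have l2 := (hlam 2).ne'
  constructor
  · intro j X hX Y hY
    fin_cases j <;> simp only [mComp, Matrix.cons_val_zero, Matrix.cons_val_one,
      Matrix.head_cons, Matrix.cons_val_two, Matrix.tail_cons,
      Set.mem_setOf_eq, Fin.isValue] at hX hY
    · obtain ⟨x, rfl⟩ := hX; obtain ⟨y, rfl⟩ := hY
      obtain ⟨u, v, w, hU⟩ := hUmem _ (Dm_mem x 0 0) _ (Dm_mem y 0 0)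
      rw [hU, ← Dm_zero]
      apply Dm_eq_of_gmet lam hlam
      intro p q r
      have h := hUdef _ (Dm_mem x 0 0) _ (Dm_mem y 0 0) _ (Dm_mem p q r)
      rw [hU, projm_bracket, projm_bracket, gmet_Dm, gmet_Dm, gmet_Dm] at h
      rw [gmet_Dm, gmet_Dm]
      simp only [Complex.mul_re, Complex.mul_im, Complex.conj_re, Complex.conj_im,
        Complex.sub_re, Complex.sub_im, Complex.zero_re, Complex.zero_im,
        Complex.mul_re, mul_zero, zero_mul, sub_zero, zero_sub, neg_zero] at h ⊢
      linarith [h]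
    · obtain ⟨x, rfl⟩ := hX; obtain ⟨y, rfl⟩ := hY
      obtain ⟨u, v, w, hU⟩ := hUmem _ (Dm_mem 0 x 0) _ (Dm_mem 0 y 0)
      rw [hU, ← Dm_zero]
      apply Dm_eq_of_gmet lam hlam
      intro p q r
      have h := hUdef _ (Dm_mem 0 x 0) _ (Dm_mem 0 y 0) _ (Dm_mem p q r)
      rw [hU, projm_bracket, projm_bracket, gmet_Dm, gmet_Dm, gmet_Dm] at h
      rw [gmet_Dm, gmet_Dm]
      simp only [Complex.mul_re, Complex.mul_im, Complex.conj_re, Complex.conj_im,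
        Complex.sub_re, Complex.sub_im, Complex.zero_re, Complex.zero_im,
        mul_zero, zero_mul, sub_zero, zero_sub, neg_zero] at h ⊢
      linarith [h]
    · obtain ⟨x, rfl⟩ := hX; obtain ⟨y, rfl⟩ := hY
      obtain ⟨u, v, w, hU⟩ := hUmem _ (Dm_mem 0 0 x) _ (Dm_mem 0 0 y)
      rw [hU, ← Dm_zero]
      apply Dm_eq_of_gmet lam hlam
      intro p q r
      have h := hUdef _ (Dm_mem 0 0 x) _ (Dm_mem 0 0 y) _ (Dm_mem p q r)
      rw [hU, projm_bracket, projm_bracket, gmet_Dm, gmet_Dm, gmet_Dm] at h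
      rw [gmet_Dm, gmet_Dm]
      simp only [Complex.mul_re, Complex.mul_im, Complex.conj_re, Complex.conj_im,
        Complex.sub_re, Complex.sub_im, Complex.zero_re, Complex.zero_im,
        mul_zero, zero_mul, sub_zero, zero_sub, neg_zero] at h ⊢
      linarith [h]
  · intro j X hX Y hY
    have hj : j = 0 ∨ j = 1 ∨ j = 2 := by fin_cases j <;> decide
    rcases hj with rfl | rfl | rfl <;>
      simp only [mComp, Matrix.cons_val_zero, Matrix.cons_val_one,
        Matrix.head_cons, Matrix.cons_val_two, Matrix.tail_cons,
        Set.mem_setOf_eq, Fin.isValue, Fin.reduceAdd] at hX hY ⊢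
    · obtain ⟨x, rfl⟩ := hX; obtain ⟨y, rfl⟩ := hY
      obtain ⟨u, v, w, hU⟩ := hUmem _ (Dm_mem 0 x 0) _ (Dm_mem 0 0 y)
      rw [hU, brkt1, smul_Dm]
      apply Dm_eq_of_gmet lam hlam
      intro p q r
      have h := hUdef _ (Dm_mem 0 x 0) _ (Dm_mem 0 0 y) _ (Dm_mem p q r)
      rw [hU, projm_bracket, projm_bracket, gmet_Dm, gmet_Dm, gmet_Dm] at h
      rw [gmet_Dm, gmet_Dm]
      simp only [Complex.mul_re, Complex.mul_im, Complex.conj_re, Complex.conj_im,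
        Complex.sub_re, Complex.sub_im, Complex.zero_re, Complex.zero_im,
        Complex.ofReal_re, Complex.ofReal_im, mul_zero, zero_mul, sub_zero,
        zero_sub, neg_zero, mul_neg, neg_neg, neg_mul, Complex.neg_re,
        Complex.neg_im] at h ⊢
      field_simp
      linear_combination h
    · obtain ⟨x, rfl⟩ := hX; obtain ⟨y, rfl⟩ := hY
      obtain ⟨u, v, w, hU⟩ := hUmem _ (Dm_mem 0 0 x) _ (Dm_mem y 0 0)
      rw [hU, brkt2, smul_Dm]
      apply Dm_eq_of_gmet lam hlam
      intro p q r
      have h := hUdef _ (Dm_mem 0 0 x) _ (Dm_mem y 0 0) _ (Dm_mem p q r)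
      rw [hU, projm_bracket, projm_bracket, gmet_Dm, gmet_Dm, gmet_Dm] at h
      rw [gmet_Dm, gmet_Dm]
      simp only [Complex.mul_re, Complex.mul_im, Complex.conj_re, Complex.conj_im,
        Complex.sub_re, Complex.sub_im, Complex.zero_re, Complex.zero_im,
        Complex.ofReal_re, Complex.ofReal_im, mul_zero, zero_mul, sub_zero,
        zero_sub, neg_zero, mul_neg, neg_neg, neg_mul, Complex.neg_re,
        Complex.neg_im] at h ⊢
      field_simp
      linear_combination h
    · obtain ⟨x, rfl⟩ := hX; obtain ⟨y, rfl⟩ := hY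
      obtain ⟨u, v, w, hU⟩ := hUmem _ (Dm_mem x 0 0) _ (Dm_mem 0 y 0)
      rw [hU, brkt3, smul_Dm]
      apply Dm_eq_of_gmet lam hlam
      intro p q r
      have h := hUdef _ (Dm_mem x 0 0) _ (Dm_mem 0 y 0) _ (Dm_mem p q r)
      rw [hU, projm_bracket, projm_bracket, gmet_Dm, gmet_Dm, gmet_Dm] at h
      rw [gmet_Dm, gmet_Dm]
      simp only [Complex.mul_re, Complex.mul_im, Complex.conj_re, Complex.conj_im,
        Complex.sub_re, Complex.sub_im, Complex.zero_re, Complex.zero_im,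
        Complex.ofReal_re, Complex.ofReal_im, mul_zero, zero_mul, sub_zero,
        zero_sub, neg_zero, mul_neg, neg_neg, neg_mul, Complex.neg_re,
        Complex.neg_im] at h ⊢
      field_simp
      linear_combination h
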